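/- Let p ≥ 1 be an integer, M a Hermitian s×s complex matrix with ‖M‖_∞ ≤ 1, and q ∈ ℝ[x]. Then tr(q(M)) − sup_{x∈[−1,1]} max(q(x) − f_p(x), 0) ≤ d_p(M)^p ≤ tr(q(M)) + sup_{x∈[−1,1]} max(f_p(x) − q(x), 0). -/

import Mathlib

open scoped ComplexOrder

noncomputable section

/-- The negative part function `f_p` for a natural exponent `p`:
`f_p(x) = |x|^p` for `x < 0` and `0` otherwise. -/
def negPart (p : ℕ) (x : ℝ) : ℝ := if x < 0 then |x| ^ p else 0

/-- The normalized trace of `f(M)` for a Hermitian matrix `M`, defined spectrally: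
`tr(f(M)) = s⁻¹ ∑ᵢ f(λᵢ)`. -/
def trFun {s : ℕ} {M : Matrix (Fin s) (Fin s) ℂ} (hM : M.IsHermitian)
    (f : ℝ → ℝ) : ℝ := (s : ℝ)⁻¹ * ∑ i, f (hM.eigenvalues i)

/-- The normalized Schatten p-norm of a Hermitian matrix:
`‖M‖_p = (s⁻¹ ∑ᵢ |λᵢ|^p)^(1/p)`. -/
def schattenNorm {s : ℕ} (p : ℝ) {M : Matrix (Fin s) (Fin s) ℂ}
    (hM : M.IsHermitian) : ℝ :=
  ((s : ℝ)⁻¹ * ∑ i, |hM.eigenvalues i| ^ p) ^ (1 / p)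

/-- The distance of a Hermitian matrix to the psd cone in normalized Schatten p-norm. -/
def distPSD {s : ℕ} (p : ℝ) {M : Matrix (Fin s) (Fin s) ℂ}
    (hM : M.IsHermitian) : ℝ :=
  sInf { r : ℝ | ∃ (N : Matrix (Fin s) (Fin s) ℂ) (hN : N.PosSemidef),
    r = schattenNorm p (hM.sub hN.isHermitian) }

/-! ### Auxiliary lemmas about `negPart` -/

lemma negPart_eq {p : ℕ} (hp : 1 ≤ p) (x : ℝ) : negPart p x = max (-x) 0 ^ p := by
  unfold _root_.negPart
  split_ifs with h
  · rw [abs_of_neg h, max_eq_left (by linarith)]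
  · rw [max_eq_right (by linarith [not_lt.mp h]), zero_pow (by omega)]

lemma negPart_nonneg' (p : ℕ) (x : ℝ) : 0 ≤ negPart p x := by
  unfold _root_.negPart; split_ifs <;> positivity

lemma negPart_le_abs_pow (p : ℕ) (x : ℝ) : negPart p x ≤ |x| ^ p := by
  unfold _root_.negPart; split_ifs with h
  · exact le_refl _
  · positivity

lemma negPart_anti' {p : ℕ} {x y : ℝ} (hxy : x ≤ y) : negPart p y ≤ negPart p x := by
  by_cases hy : y < 0
  · have hx : x < 0 := lt_of_le_of_lt hxy hy
    simp only [_root_.negPart, if_pos hy, if_pos hx]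
    exact pow_le_pow_left₀ (abs_nonneg _) (by rw [abs_of_neg hy, abs_of_neg hx]; linarith) p
  · simp only [_root_.negPart, if_neg hy]
    split_ifs <;> positivity

lemma negPart_min' {p : ℕ} (hp : 1 ≤ p) (x : ℝ) : negPart p x = |min x 0| ^ p := by
  unfold _root_.negPart; split_ifs with h
  · rw [min_eq_left h.le]
  · rw [min_eq_right (not_lt.mp h), abs_zero, zero_pow (by omega)]

/-! ### Convexity lemmas -/

lemma convexOn_pow_comp {f : ℝ → ℝ} (hf : ConvexOn ℝ Set.univ f) (hnn : ∀ x, 0 ≤ f x) (p : ℕ) :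
    ConvexOn ℝ Set.univ fun x => f x ^ p := by
  refine ⟨convex_univ, fun x _ y _ a b ha hb hab => ?_⟩
  have h1 : f (a • x + b • y) ≤ a * f x + b * f y := by
    simpa [smul_eq_mul] using hf.2 (Set.mem_univ x) (Set.mem_univ y) ha hb hab
  have h2 : f (a • x + b • y) ^ p ≤ (a * f x + b * f y) ^ p :=
    pow_le_pow_left₀ (hnn _) h1 p
  have h3 : (a * f x + b * f y) ^ p ≤ a * f x ^ p + b * f y ^ p := by
    simpa [smul_eq_mul] using
      (convexOn_pow p).2 (Set.mem_Ici.mpr (hnn x)) (Set.mem_Ici.mpr (hnn y)) ha hb hab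
  simpa [smul_eq_mul] using h2.trans h3

lemma convexOn_abs_pow (p : ℕ) : ConvexOn ℝ Set.univ fun x : ℝ => |x| ^ p := by
  have h : ConvexOn ℝ Set.univ (fun x : ℝ => |x|) := by
    exact (convexOn_univ_norm (E := ℝ))
  exact convexOn_pow_comp h (fun x => abs_nonneg x) p

lemma convexOn_maxNeg : ConvexOn ℝ Set.univ (fun x : ℝ => max (-x) 0) := by
  refine ⟨convex_univ, fun x _ y _ a b ha hb hab => ?_⟩
  simp only [smul_eq_mul]
  apply max_le
  · have h1 : a * (-x) ≤ a * max (-x) 0 := mul_le_mul_of_nonneg_left (le_max_left _ _) ha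
    have h2 : b * (-y) ≤ b * max (-y) 0 := mul_le_mul_of_nonneg_left (le_max_left _ _) hb
    nlinarith
  · have h1 : 0 ≤ a * max (-x) 0 := mul_nonneg ha (le_max_right _ _)
    have h2 : 0 ≤ b * max (-y) 0 := mul_nonneg hb (le_max_right _ _)
    linarith

lemma convexOn_negPart {p : ℕ} (hp : 1 ≤ p) : ConvexOn ℝ Set.univ (negPart p) := by
  have heq : negPart p = fun x => max (-x) 0 ^ p := funext (negPart_eq hp)
  rw [heq]
  exact convexOn_pow_comp convexOn_maxNeg (fun x => le_max_right _ _) p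

lemma continuous_negPart' {p : ℕ} (hp : 1 ≤ p) : Continuous (negPart p) := by
  have heq : negPart p = fun x => max (-x) 0 ^ p := funext (negPart_eq hp)
  rw [heq]
  exact (continuous_neg.max continuous_const).pow p

/-! ### The core doubly-stochastic / Jensen lemma -/

lemma core_jensen {s : ℕ} {B : Matrix (Fin s) (Fin s) ℂ} (hB : B.IsHermitian)
    (V : Matrix (Fin s) (Fin s) ℂ) (hV : V ∈ Matrix.unitaryGroup (Fin s) ℂ)
    (d : Fin s → ℝ) {g : ℝ → ℝ} (hg : ConvexOn ℝ Set.univ g)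
    (hle : ∀ i, g (hB.eigenvalues i) ≤ g
      (((star (hB.eigenvectorUnitary : Matrix (Fin s) (Fin s) ℂ) *
        (V * (Matrix.diagonal (RCLike.ofReal ∘ d) : Matrix (Fin s) (Fin s) ℂ) * star V) *
        (hB.eigenvectorUnitary : Matrix (Fin s) (Fin s) ℂ)) i i).re)) :
    ∑ i, g (hB.eigenvalues i) ≤ ∑ j, g (d j) := by
  set U : Matrix (Fin s) (Fin s) ℂ := (hB.eigenvectorUnitary : Matrix (Fin s) (Fin s) ℂ) with hUdef
  have hU : U ∈ Matrix.unitaryGroup (Fin s) ℂ := (hB.eigenvectorUnitary).2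
  set W : Matrix (Fin s) (Fin s) ℂ := star V * U with hWdef
  have hW : W ∈ Matrix.unitaryGroup (Fin s) ℂ := mul_mem (Unitary.star_mem hV) hU
  set c : Fin s → Fin s → ℝ := fun i j => Complex.normSq (W j i) with hcdef
  have hkey : star U * (V * (Matrix.diagonal (RCLike.ofReal ∘ d) : Matrix (Fin s) (Fin s) ℂ) * star V) * U
      = star W * (Matrix.diagonal (RCLike.ofReal ∘ d) : Matrix (Fin s) (Fin s) ℂ) * W := by
    simp only [hWdef, star_mul, star_star, Matrix.mul_assoc]
  have hentry : ∀ i, (star W * (Matrix.diagonal (RCLike.ofReal ∘ d) : Matrix (Fin s) (Fin s) ℂ) * W) i i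
      = ∑ j, ((d j : ℂ)) * (W j i * star (W j i)) := by
    intro i
    rw [Matrix.mul_apply]
    refine Finset.sum_congr rfl fun j _ => ?_
    rw [Matrix.mul_diagonal, Matrix.star_apply]
    simp only [Function.comp_apply]
    rw [show (RCLike.ofReal (d j) : ℂ) = ((d j : ℂ)) from rfl]
    ring
  have hre : ∀ i, ((star W * (Matrix.diagonal (RCLike.ofReal ∘ d) : Matrix (Fin s) (Fin s) ℂ) * W) i i).re
      = ∑ j, d j * c i j := by
    intro i
    rw [hentry, Complex.re_sum]
    refine Finset.sum_congr rfl fun j _ => ?_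
    rw [show star (W j i) = starRingEnd ℂ (W j i) from rfl, Complex.mul_conj,
      ← Complex.ofReal_mul, Complex.ofReal_re]
  have hcol : ∀ i, ∑ j, c i j = 1 := by
    intro i
    have h1 : star W * W = 1 := Matrix.mem_unitaryGroup_iff'.mp hW
    have h2 : (star W * W) i i = ∑ j, ((c i j : ℝ) : ℂ) := by
      rw [Matrix.mul_apply]
      refine Finset.sum_congr rfl fun j _ => ?_
      rw [Matrix.star_apply, mul_comm,
        show star (W j i) = starRingEnd ℂ (W j i) from rfl, Complex.mul_conj]
    have h3 : ((∑ j, c i j : ℝ) : ℂ) = 1 := by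
      push_cast
      rw [← h2, h1, Matrix.one_apply_eq]
    exact_mod_cast h3
  have hrow : ∀ j, ∑ i, c i j = 1 := by
    intro j
    have h1 : W * star W = 1 := Matrix.mem_unitaryGroup_iff.mp hW
    have h2 : (W * star W) j j = ∑ i, ((c i j : ℝ) : ℂ) := by
      rw [Matrix.mul_apply]
      refine Finset.sum_congr rfl fun i _ => ?_
      rw [Matrix.star_apply,
        show star (W j i) = starRingEnd ℂ (W j i) from rfl, Complex.mul_conj]
    have h3 : ((∑ i, c i j : ℝ) : ℂ) = 1 := by
      push_cast
      rw [← h2, h1, Matrix.one_apply_eq]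
    exact_mod_cast h3
  calc ∑ i, g (hB.eigenvalues i)
      ≤ ∑ i, g (∑ j, c i j • d j) := by
        refine Finset.sum_le_sum fun i _ => ?_
        have h := hle i
        rw [hkey, hre] at h
        refine h.trans_eq (congrArg g ?_)
        refine Finset.sum_congr rfl fun j _ => ?_
        rw [smul_eq_mul, mul_comm]
    _ ≤ ∑ i, ∑ j, c i j * g (d j) := by
        refine Finset.sum_le_sum fun i _ => ?_
        simpa [smul_eq_mul] using
          hg.map_sum_le (fun j _ => Complex.normSq_nonneg _) (hcol i)
            (fun j _ => Set.mem_univ _)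
    _ = ∑ j, g (d j) := by
        rw [Finset.sum_comm]
        refine Finset.sum_congr rfl fun j _ => ?_
        rw [← Finset.sum_mul, hrow j, one_mul]

/-! ### Diagonal entries of psd matrices -/

lemma psd_diag_re_nonneg {s : ℕ} {A : Matrix (Fin s) (Fin s) ℂ} (hA : A.PosSemidef)
    (i : Fin s) : 0 ≤ (A i i).re := by
  have h := hA.dotProduct_mulVec_nonneg (Pi.single i 1)
  have heq : dotProduct (star (Pi.single i 1 : Fin s → ℂ))
      (Matrix.mulVec A (Pi.single i 1 : Fin s → ℂ)) = A i i := by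
    simp [dotProduct, Matrix.mulVec_single, Pi.single_apply, apply_ite,
      Finset.sum_ite_eq']
  rw [heq] at h
  exact (Complex.le_def.mp h).1

/-! ### Lower bound: `∑ f_p(λ(M)) ≤ ∑ |λ(M-N)|^p` for psd `N` -/

lemma lower_aux {s : ℕ} {p : ℕ} (hp : 1 ≤ p) {M N : Matrix (Fin s) (Fin s) ℂ}
    (hM : M.IsHermitian) (hN : N.PosSemidef) :
    ∑ i, negPart p (hM.eigenvalues i) ≤ ∑ j, |(hM.sub hN.isHermitian).eigenvalues j| ^ p := by
  have hA : (M - N).IsHermitian := hM.sub hN.isHermitian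
  have h1 : ∑ i, negPart p (hM.eigenvalues i) ≤ ∑ j, negPart p (hA.eigenvalues j) := by
    refine core_jensen hM (hA.eigenvectorUnitary : Matrix (Fin s) (Fin s) ℂ)
      (hA.eigenvectorUnitary).2 hA.eigenvalues (convexOn_negPart hp) ?_
    intro i
    have hspec : (hA.eigenvectorUnitary : Matrix (Fin s) (Fin s) ℂ) *
        Matrix.diagonal (RCLike.ofReal ∘ hA.eigenvalues) *
        star (hA.eigenvectorUnitary : Matrix (Fin s) (Fin s) ℂ) = M - N :=
      hA.spectral_theorem.symm
    rw [hspec]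
    set U : Matrix (Fin s) (Fin s) ℂ := (hM.eigenvectorUnitary : Matrix (Fin s) (Fin s) ℂ)
    have hdiag : star U * M * U = Matrix.diagonal (RCLike.ofReal ∘ hM.eigenvalues) :=
      by simpa using hM.conjStarAlgAut_star_eigenvectorUnitary
    have hsplit : (star U * (M - N) * U) i i
        = ((hM.eigenvalues i : ℂ)) - (star U * N * U) i i := by
      rw [Matrix.mul_sub, Matrix.sub_mul, Matrix.sub_apply, hdiag, Matrix.diagonal_apply_eq]
      rfl
    rw [hsplit, Complex.sub_re, Complex.ofReal_re]
    have hpsd : (star U * N * U).PosSemidef := by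
      have := hN.conjTranspose_mul_mul_same U
      rwa [← Matrix.star_eq_conjTranspose] at this
    have hnn : 0 ≤ ((star U * N * U) i i).re := psd_diag_re_nonneg hpsd i
    exact negPart_anti' (by linarith)
  refine h1.trans (Finset.sum_le_sum fun j _ => ?_)
  have heig : hA.eigenvalues = (hM.sub hN.isHermitian).eigenvalues := rfl
  rw [heig]
  exact negPart_le_abs_pow p _

/-! ### Upper bound: existence of a psd `N` with `∑ |λ(M-N)|^p ≤ ∑ f_p(λ(M))` -/

lemma upper_aux {s : ℕ} {p : ℕ} (hp : 1 ≤ p) {M : Matrix (Fin s) (Fin s) ℂ}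
    (hM : M.IsHermitian) :
    ∃ (N : Matrix (Fin s) (Fin s) ℂ) (hN : N.PosSemidef),
      ∑ i, |(hM.sub hN.isHermitian).eigenvalues i| ^ p
        ≤ ∑ j, negPart p (hM.eigenvalues j) := by
  set V : Matrix (Fin s) (Fin s) ℂ := (hM.eigenvectorUnitary : Matrix (Fin s) (Fin s) ℂ)
    with hVdef
  set N : Matrix (Fin s) (Fin s) ℂ :=
    V * Matrix.diagonal (RCLike.ofReal ∘ fun j => max (hM.eigenvalues j) 0) * star V with hNdef
  have hNpsd : N.PosSemidef := by
    have hd : Matrix.PosSemidef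
        (Matrix.diagonal (RCLike.ofReal ∘ fun j => max (hM.eigenvalues j) 0)
          : Matrix (Fin s) (Fin s) ℂ) := by
      refine Matrix.PosSemidef.diagonal fun j => ?_
      exact Complex.zero_le_real.mpr (le_max_right _ _)
    have := hd.mul_mul_conjTranspose_same V
    rwa [← Matrix.star_eq_conjTranspose] at this
  have hMN : M - N = V * Matrix.diagonal (RCLike.ofReal ∘ fun j => min (hM.eigenvalues j) 0)
      * star V := by
    conv_lhs => rw [hM.spectral_theorem, Unitary.conjStarAlgAut_apply, hNdef]
    rw [← hVdef, ← Matrix.sub_mul, ← Matrix.mul_sub, Matrix.diagonal_sub]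
    have hfun : (fun i => (RCLike.ofReal (hM.eigenvalues i) : ℂ) -
          RCLike.ofReal (hM.eigenvalues i ⊔ 0))
        = (RCLike.ofReal ∘ fun j => hM.eigenvalues j ⊓ 0) := by
      funext i
      show ((hM.eigenvalues i : ℝ) : ℂ) - ((hM.eigenvalues i ⊔ 0 : ℝ) : ℂ)
          = ((hM.eigenvalues i ⊓ 0 : ℝ) : ℂ)
      rw [← Complex.ofReal_sub]
      norm_cast
      rcases le_total (hM.eigenvalues i) 0 with h | h
      · rw [sup_eq_right.mpr h, inf_eq_left.mpr h, sub_zero]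
      · rw [sup_eq_left.mpr h, inf_eq_right.mpr h, sub_self]
    simp only [Function.comp_apply]
    rw [hfun]
  refine ⟨N, hNpsd, ?_⟩
  set hB : (M - N).IsHermitian := hM.sub hNpsd.isHermitian
  have h1 : ∑ i, |hB.eigenvalues i| ^ p
      ≤ ∑ j, |min (hM.eigenvalues j) 0| ^ p := by
    refine core_jensen hB V (hM.eigenvectorUnitary).2 (fun j => min (hM.eigenvalues j) 0)
      (convexOn_abs_pow p) ?_
    intro i
    rw [← hMN, show star (hB.eigenvectorUnitary : Matrix (Fin s) (Fin s) ℂ) * (M - N) * (hB.eigenvectorUnitary : Matrix (Fin s) (Fin s) ℂ) = Matrix.diagonal (RCLike.ofReal ∘ hB.eigenvalues) by simpa using hB.conjStarAlgAut_star_eigenvectorUnitary, Matrix.diagonal_apply_eq]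
    simp
  refine h1.trans (le_of_eq ?_)
  refine Finset.sum_congr rfl fun j _ => ?_
  rw [negPart_min' hp]

/-! ### Averaging lemma -/

lemma avg_le {s : ℕ} (a : Fin s → ℝ) {C : ℝ} (hC : 0 ≤ C) (h : ∀ i, a i ≤ C) :
    (s : ℝ)⁻¹ * ∑ i, a i ≤ C := by
  rcases Nat.eq_zero_or_pos s with hs | hs
  · subst hs; simp [hC]
  · have h1 : ∑ i, a i ≤ (s : ℝ) * C := by
      calc ∑ i, a i ≤ ∑ _i : Fin s, C := Finset.sum_le_sum fun i _ => h i
        _ = (s : ℝ) * C := by simp [Finset.card_univ, mul_comm]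
    have hs0 : (0 : ℝ) < s := by exact_mod_cast hs
    calc (s : ℝ)⁻¹ * ∑ i, a i ≤ (s : ℝ)⁻¹ * ((s : ℝ) * C) :=
          mul_le_mul_of_nonneg_left h1 (by positivity)
      _ = C := by field_simp

/-- for any polynomial `q`,
`tr(q(M)) - ‖(q-f_p)₊‖_∞ ≤ d_p(M)^p ≤ tr(q(M)) + ‖(q-f_p)₋‖_∞`. -/
theorem statement2 (s : ℕ) (p : ℕ) (hp : 1 ≤ p) (M : Matrix (Fin s) (Fin s) ℂ)
    (hM : M.IsHermitian) (hnorm : ∀ i, |hM.eigenvalues i| ≤ 1) (q : Polynomial ℝ) :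
    trFun hM (fun x => q.eval x) -
        sSup ((fun x => max (q.eval x - negPart p x) 0) '' Set.Icc (-1 : ℝ) 1)
      ≤ distPSD (p : ℝ) hM ^ p ∧
    distPSD (p : ℝ) hM ^ p
      ≤ trFun hM (fun x => q.eval x) +
        sSup ((fun x => max (negPart p x - q.eval x) 0) '' Set.Icc (-1 : ℝ) 1) := by
  have hp0 : (p : ℝ) ≠ 0 := by exact_mod_cast Nat.pos_of_ne_zero (by omega) |>.ne'
  set T : ℝ := (s : ℝ)⁻¹ * ∑ i, negPart p (hM.eigenvalues i) with hTdef
  have hT0 : 0 ≤ T := by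
    apply mul_nonneg (by positivity)
    exact Finset.sum_nonneg fun i _ => negPart_nonneg' p _
  -- every element of the distance set is nonneg
  have hmem_nonneg : ∀ r ∈ { r : ℝ | ∃ (N : Matrix (Fin s) (Fin s) ℂ) (hN : N.PosSemidef),
      r = schattenNorm (p : ℝ) (hM.sub hN.isHermitian) }, 0 ≤ r := by
    rintro r ⟨N, hN, rfl⟩
    apply Real.rpow_nonneg
    apply mul_nonneg (by positivity)
    exact Finset.sum_nonneg fun i _ => Real.rpow_nonneg (abs_nonneg _) _
  have hSne : { r : ℝ | ∃ (N : Matrix (Fin s) (Fin s) ℂ) (hN : N.PosSemidef),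
      r = schattenNorm (p : ℝ) (hM.sub hN.isHermitian) }.Nonempty :=
    ⟨_, 0, Matrix.PosSemidef.zero, rfl⟩
  have hbdd : BddBelow { r : ℝ | ∃ (N : Matrix (Fin s) (Fin s) ℂ) (hN : N.PosSemidef),
      r = schattenNorm (p : ℝ) (hM.sub hN.isHermitian) } := ⟨0, hmem_nonneg⟩
  have hdist0 : 0 ≤ distPSD (p : ℝ) hM := le_csInf hSne hmem_nonneg
  -- rewrite rpow as pow inside sums
  have hrpow : ∀ (x : ℝ), |x| ^ (p : ℝ) = |x| ^ p := fun x => Real.rpow_natCast |x| p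
  -- lower bound : T^(1/p) ≤ distPSD
  have hlow : T ^ (1 / (p : ℝ)) ≤ distPSD (p : ℝ) hM := by
    apply le_csInf hSne
    rintro r ⟨N, hN, rfl⟩
    unfold schattenNorm
    apply Real.rpow_le_rpow hT0 _ (by positivity)
    rw [hTdef]
    apply mul_le_mul_of_nonneg_left _ (by positivity)
    calc ∑ i, negPart p (hM.eigenvalues i)
        ≤ ∑ j, |(hM.sub hN.isHermitian).eigenvalues j| ^ p := lower_aux hp hM hN
      _ = ∑ j, |(hM.sub hN.isHermitian).eigenvalues j| ^ (p : ℝ) := by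
          exact Finset.sum_congr rfl fun j _ => (hrpow _).symm
  -- upper bound : distPSD ≤ T^(1/p)
  have hupp : distPSD (p : ℝ) hM ≤ T ^ (1 / (p : ℝ)) := by
    obtain ⟨N, hN, hle⟩ := upper_aux hp hM
    have hmem : schattenNorm (p : ℝ) (hM.sub hN.isHermitian) ∈
        { r : ℝ | ∃ (N : Matrix (Fin s) (Fin s) ℂ) (hN : N.PosSemidef),
          r = schattenNorm (p : ℝ) (hM.sub hN.isHermitian) } := ⟨N, hN, rfl⟩
    refine (csInf_le hbdd hmem).trans ?_
    unfold schattenNorm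
    apply Real.rpow_le_rpow _ _ (by positivity)
    · apply mul_nonneg (by positivity)
      exact Finset.sum_nonneg fun i _ => Real.rpow_nonneg (abs_nonneg _) _
    · rw [hTdef]
      apply mul_le_mul_of_nonneg_left _ (by positivity)
      calc ∑ i, |(hM.sub hN.isHermitian).eigenvalues i| ^ (p : ℝ)
          = ∑ i, |(hM.sub hN.isHermitian).eigenvalues i| ^ p :=
            Finset.sum_congr rfl fun i _ => hrpow _
        _ ≤ ∑ j, negPart p (hM.eigenvalues j) := hle
  have hTpow : (T ^ (1 / (p : ℝ))) ^ p = T := by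
    rw [← Real.rpow_natCast (T ^ (1 / (p : ℝ))) p, ← Real.rpow_mul hT0]
    rw [one_div, inv_mul_cancel₀ hp0, Real.rpow_one]
  have hdistp_ge : T ≤ distPSD (p : ℝ) hM ^ p := by
    calc T = (T ^ (1 / (p : ℝ))) ^ p := hTpow.symm
      _ ≤ distPSD (p : ℝ) hM ^ p := pow_le_pow_left₀ (Real.rpow_nonneg hT0 _) hlow p
  have hdistp_le : distPSD (p : ℝ) hM ^ p ≤ T := by
    calc distPSD (p : ℝ) hM ^ p ≤ (T ^ (1 / (p : ℝ))) ^ p := pow_le_pow_left₀ hdist0 hupp p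
      _ = T := hTpow
  -- comparison with the polynomial
  set C₁ : ℝ := sSup ((fun x => max (q.eval x - negPart p x) 0) '' Set.Icc (-1 : ℝ) 1) with hC₁def
  set C₂ : ℝ := sSup ((fun x => max (negPart p x - q.eval x) 0) '' Set.Icc (-1 : ℝ) 1) with hC₂def
  have hcont1 : Continuous fun x => max (q.eval x - negPart p x) 0 :=
    ((q.continuous_aeval.sub (continuous_negPart' hp)).max continuous_const)
  have hcont2 : Continuous fun x => max (negPart p x - q.eval x) 0 :=
    (((continuous_negPart' hp).sub q.continuous_aeval).max continuous_const)
  have hbdd1 : BddAbove ((fun x => max (q.eval x - negPart p x) 0) '' Set.Icc (-1 : ℝ) 1) :=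
    (isCompact_Icc.image hcont1).bddAbove
  have hbdd2 : BddAbove ((fun x => max (negPart p x - q.eval x) 0) '' Set.Icc (-1 : ℝ) 1) :=
    (isCompact_Icc.image hcont2).bddAbove
  have hC₁0 : 0 ≤ C₁ := by
    refine le_trans (le_max_right (q.eval 0 - negPart p 0) 0) (le_csSup hbdd1 ?_)
    exact ⟨0, by norm_num, rfl⟩
  have hC₂0 : 0 ≤ C₂ := by
    refine le_trans (le_max_right (negPart p 0 - q.eval 0) 0) (le_csSup hbdd2 ?_)
    exact ⟨0, by norm_num, rfl⟩
  have heigmem : ∀ i, hM.eigenvalues i ∈ Set.Icc (-1 : ℝ) 1 := by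
    intro i
    rcases abs_le.mp (hnorm i) with ⟨h1, h2⟩
    exact ⟨h1, h2⟩
  have hq1 : trFun hM (fun x => q.eval x) - T ≤ C₁ := by
    have heq : trFun hM (fun x => q.eval x) - T
        = (s : ℝ)⁻¹ * ∑ i, (q.eval (hM.eigenvalues i) - negPart p (hM.eigenvalues i)) := by
      rw [hTdef]
      unfold trFun
      rw [Finset.sum_sub_distrib, mul_sub]
    rw [heq]
    apply avg_le _ hC₁0
    intro i
    refine le_trans (le_max_left _ 0) (le_csSup hbdd1 ?_)
    exact ⟨hM.eigenvalues i, heigmem i, rfl⟩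
  have hq2 : T - trFun hM (fun x => q.eval x) ≤ C₂ := by
    have heq : T - trFun hM (fun x => q.eval x)
        = (s : ℝ)⁻¹ * ∑ i, (negPart p (hM.eigenvalues i) - q.eval (hM.eigenvalues i)) := by
      rw [hTdef]
      unfold trFun
      rw [Finset.sum_sub_distrib, mul_sub]
    rw [heq]
    apply avg_le _ hC₂0
    intro i
    refine le_trans (le_max_left _ 0) (le_csSup hbdd2 ?_)
    exact ⟨hM.eigenvalues i, heigmem i, rfl⟩
  constructor
  · linarith
  · linarith

end
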